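/- (Monotonicity) Fix an instruction field I and an odometer h. If V ⊆ Ṽ ⊆ ℤ^d and η ≤ η̃ pointwise (in the order of ℕ_𝔰 where 0 < 𝔰 < 1 < 2 < ⋯), then m_{V,η,h}(x) ≤ m_{Ṽ,η̃,h}(x) for every x ∈ ℤ^d. -/
import Mathlib


open scoped ENNReal NNReal
open MeasureTheory

namespace ARW

/-- A site of the lattice `ℤ^d`. -/
abbrev Site (d : ℕ) := Fin d → ℤ

/-- The set `ℕ_𝔰 = ℕ ∪ {𝔰}` of possible values at a site. -/
inductive NS where
  | nat : ℕ → NS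
  | s : NS
deriving DecidableEq

/-- Rank function realizing the total order `0 < 𝔰 < 1 < 2 < ⋯`
(`𝔰` is placed at `1/2`). -/
def NS.val : NS → ℚ
  | .nat n => n
  | .s => 1/2

instance : LE NS := ⟨fun a b => a.val ≤ b.val⟩
instance : LT NS := ⟨fun a b => a.val < b.val⟩

/-- Remove one particle: `n − 1`, with `𝔰 − 1 = 0`. -/
def NS.dec : NS → NS
  | .nat 0 => .nat 0
  | .nat (n+1) => .nat n
  | .s => .nat 0

/-- Add one particle: `n + 1`, with `𝔰 + 1 = 2`. -/
def NS.inc : NS → NS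
  | .nat n => .nat (n+1)
  | .s => .nat 2

/-- Multiplication by `𝔰`: `n·𝔰 = n` for `n ≥ 2`, `1·𝔰 = 𝔰`, `𝔰·𝔰 = 𝔰`. -/
def NS.mulS : NS → NS
  | .nat 0 => .nat 0
  | .nat 1 => .s
  | .nat (n+2) => .nat (n+2)
  | .s => .s

/-- A configuration of the ARW. -/
abbrev Config (d : ℕ) := Site d → NS

/-- An odometer. -/
abbrev Odom (d : ℕ) := Site d → ℕ

/-- An instruction: either a sleep instruction `τ_{x𝔰}`, or a move instruction
`τ_{xy}` recorded through the displacement `z = y − x ≠ 0`. -/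
inductive Instr (d : ℕ) where
  | sleep : Instr d
  | move : (z : Site d) → z ≠ 0 → Instr d

/-- Applying an instruction at site `x` to a configuration: `τ_{x𝔰}` replaces `η(x)` by
`η(x)·𝔰`; `τ_{xy}` (with `y = x + z`) decreases `η(x)` by one and increases `η(y)` by one. -/
def applyInstr {d : ℕ} (x : Site d) (ι : Instr d) (η : Config d) : Config d :=
  match ι with
  | .sleep => Function.update η x (η x).mulS
  | .move z _ => fun w =>
      if w = x then (η x).dec
      else if w = x + z then (η (x + z)).inc
      else η w

/-- A field of instructions `(τ^{x,j})_{x ∈ ℤ^d, j ∈ ℕ}`. -/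
abbrev InstrField (d : ℕ) := Site d → ℕ → Instr d

/-- Toppling site `x`: `Φ_x(η,h) = (τ^{x,h(x)+1} η, h + δ_x)`. -/
def topple {d : ℕ} (I : InstrField d) (x : Site d) (s : Config d × Odom d) :
    Config d × Odom d :=
  (applyInstr x (I x (s.2 x + 1)) s.1, Function.update s.2 x (s.2 x + 1))

/-- `Φ_α` for a finite sequence `α = (x_1, …, x_k)` of sites (`x_1` acts first). -/
def toppleSeq {d : ℕ} (I : InstrField d) :
    List (Site d) → Config d × Odom d → Config d × Odom d
  | [], s => s
  | x :: α, s => toppleSeq I α (topple I x s)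

/-- Site `x` is unstable for `η` if `η(x) ≥ 1`. -/
def Unstable {d : ℕ} (η : Config d) (x : Site d) : Prop := NS.nat 1 ≤ η x

/-- Toppling `x` is acceptable for `η` if `η(x) ≠ 0`. -/
def AcceptableAt {d : ℕ} (η : Config d) (x : Site d) : Prop := η x ≠ NS.nat 0

/-- `α` is a legal sequence of topplings for `(η,h)`: each successive toppling is legal. -/
inductive LegalSeq {d : ℕ} (I : InstrField d) : List (Site d) → Config d × Odom d → Prop
  | nil (s : Config d × Odom d) : LegalSeq I [] s
  | cons {x : Site d} {α : List (Site d)} {s : Config d × Odom d} :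
      Unstable s.1 x → LegalSeq I α (topple I x s) → LegalSeq I (x :: α) s

/-- `α` is an acceptable sequence of topplings for `(η,h)`. -/
inductive AcceptableSeq {d : ℕ} (I : InstrField d) : List (Site d) → Config d × Odom d → Prop
  | nil (s : Config d × Odom d) : AcceptableSeq I [] s
  | cons {x : Site d} {α : List (Site d)} {s : Config d × Odom d} :
      AcceptableAt s.1 x → AcceptableSeq I α (topple I x s) → AcceptableSeq I (x :: α) s

/-- `η` is stable in `V`: every `x ∈ V` is stable for `η`. -/
def StableIn {d : ℕ} (η : Config d) (V : Set (Site d)) : Prop :=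
  ∀ x ∈ V, ¬ Unstable η x

/-- `m_{V,η,h}(x) = sup { m_β(x) : β ⊆ V legal for (η,h) }`, as an element of `ℕ∞`. -/
noncomputable def mV {d : ℕ} (I : InstrField d) (V : Set (Site d)) (η : Config d) (h : Odom d)
    (x : Site d) : ℕ∞ :=
  ⨆ (β : List (Site d)) (_ : (∀ y ∈ β, y ∈ V) ∧ LegalSeq I β (η, h)), (β.count x : ℕ∞)

/-- `m_{η,h} = m_{ℤ^d,η,h}`. -/
noncomputable def mFull {d : ℕ} (I : InstrField d) (η : Config d) (h : Odom d) :
    Site d → ℕ∞ :=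
  mV I Set.univ η h

/-- The zero odometer. -/
def zeroOdom (d : ℕ) : Odom d := fun _ => 0

/-- `η` is `I`-stabilizable: `m_{η;I}(x) < ∞` for every `x`. -/
def Stabilizable {d : ℕ} (I : InstrField d) (η : Config d) : Prop :=
  ∀ x : Site d, mFull I η (zeroOdom d) x < ⊤

/-- `η` is `I`-explosive: `m_{η;I}(x) = ∞` for every `x`. -/
def Explosive {d : ℕ} (I : InstrField d) (η : Config d) : Prop :=
  ∀ x : Site d, mFull I η (zeroOdom d) x = ⊤

lemma NS.le_def (a b : NS) : a ≤ b ↔ a.val ≤ b.val := Iff.rfl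

lemma NS.le_refl' (a : NS) : a ≤ a := (NS.le_def a a).mpr le_rfl

lemma NS.le_trans' {a b c : NS} (h1 : a ≤ b) (h2 : b ≤ c) : a ≤ c :=
  (NS.le_def a c).mpr (le_trans ((NS.le_def a b).mp h1) ((NS.le_def b c).mp h2))

lemma NS.nat_le_nat {n m : ℕ} : NS.nat n ≤ NS.nat m ↔ n ≤ m := by
  rw [NS.le_def]
  show (n : ℚ) ≤ (m : ℚ) ↔ n ≤ m
  exact Nat.cast_le

lemma NS.zero_le (b : NS) : NS.nat 0 ≤ b := by
  rw [NS.le_def]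
  cases b with
  | nat m => show (0:ℚ) ≤ (m:ℚ); positivity
  | s => show (0:ℚ) ≤ 1/2; norm_num

lemma NS.s_le_nat_of (m : ℕ) (hm : 1 ≤ m) : NS.s ≤ NS.nat m := by
  rw [NS.le_def]
  show (1/2 : ℚ) ≤ (m : ℚ)
  have : (1:ℚ) ≤ (m:ℚ) := by exact_mod_cast hm
  linarith

lemma NS.nat_le_s {n : ℕ} (h : NS.nat n ≤ NS.s) : n = 0 := by
  rw [NS.le_def] at h
  have h' : (n:ℚ) ≤ 1/2 := h
  by_contra hn
  have : (1 : ℚ) ≤ (n : ℚ) := by exact_mod_cast Nat.one_le_iff_ne_zero.mpr hn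
  linarith

lemma NS.s_le_nat {m : ℕ} (h : NS.s ≤ NS.nat m) : 1 ≤ m := by
  rw [NS.le_def] at h
  have h' : (1/2:ℚ) ≤ (m:ℚ) := h
  by_contra hm
  push_neg at hm
  interval_cases m
  norm_num at h'

lemma NS.dec_mono {a b : NS} (hab : a ≤ b) : a.dec ≤ b.dec := by
  cases a with
  | nat n =>
    cases b with
    | nat m =>
      have hnm : n ≤ m := NS.nat_le_nat.mp hab
      match n, m, hnm with
      | 0, m, _ => exact NS.zero_le _
      | (n+1), (m+1), h => exact NS.nat_le_nat.mpr (by omega)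
    | s =>
      have := NS.nat_le_s hab
      subst this
      exact NS.le_refl' _
  | s => exact NS.zero_le _
  
lemma NS.inc_mono {a b : NS} (hab : a ≤ b) : a.inc ≤ b.inc := by
  cases a with
  | nat n =>
    cases b with
    | nat m => exact NS.nat_le_nat.mpr (by have := NS.nat_le_nat.mp hab; omega)
    | s =>
      have := NS.nat_le_s hab
      subst this
      exact NS.nat_le_nat.mpr (by omega)
  | s =>
    cases b with
    | nat m =>
      have := NS.s_le_nat hab
      exact NS.nat_le_nat.mpr (by omega)
    | s => exact NS.le_refl' _

lemma NS.s_le_s : NS.s ≤ NS.s := NS.le_refl' _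

lemma NS.mulS_mono {a b : NS} (hab : a ≤ b) : a.mulS ≤ b.mulS := by
  cases a with
  | nat n =>
    cases b with
    | nat m =>
      have hnm : n ≤ m := NS.nat_le_nat.mp hab
      match n, m, hnm with
      | 0, m, _ => exact NS.zero_le _
      | 1, 1, _ => exact NS.s_le_s
      | 1, (m+2), _ => exact NS.s_le_nat_of (m+2) (by omega)
      | (n+2), (m+2), h => exact NS.nat_le_nat.mpr h
    | s =>
      have := NS.nat_le_s hab
      subst this
      exact NS.zero_le _
  | s =>
    cases b with
    | nat m =>
      have hm := NS.s_le_nat hab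
      match m, hm with
      | 1, _ => exact NS.s_le_s
      | (m+2), _ => exact NS.s_le_nat_of (m+2) (by omega)
    | s => exact NS.s_le_s

lemma applyInstr_mono {d : ℕ} (x : Site d) (ι : Instr d) {η η' : Config d}
    (hη : ∀ w, η w ≤ η' w) : ∀ w, applyInstr x ι η w ≤ applyInstr x ι η' w := by
  intro w
  cases ι with
  | sleep =>
    simp only [applyInstr, Function.update]
    by_cases hw : w = x
    · subst hw; simp only [dif_pos rfl]; exact NS.mulS_mono (hη w)
    · simp only [dif_neg hw]; exact hη w
  | move z hz =>
    simp only [applyInstr]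
    by_cases hw : w = x
    · simp only [if_pos hw]; exact NS.dec_mono (hη x)
    · simp only [if_neg hw]
      by_cases hw2 : w = x + z
      · simp only [if_pos hw2]; exact NS.inc_mono (hη (x + z))
      · simp only [if_neg hw2]; exact hη w

lemma LegalSeq.mono {d : ℕ} (I : InstrField d) :
    ∀ (β : List (Site d)) (η η' : Config d) (h : Odom d),
      (∀ w, η w ≤ η' w) → LegalSeq I β (η, h) → LegalSeq I β (η', h) := by
  intro β
  induction β with
  | nil => intro η η' h _ _; exact LegalSeq.nil _
  | cons x α ih =>
    intro η η' h hη hl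
    cases hl with
    | cons hu hrest =>
      refine LegalSeq.cons ?_ ?_
      · exact NS.le_trans' hu (hη x)
      · exact ih _ _ _ (applyInstr_mono x _ hη) hrest

/-- **Monotonicity**: if `V ⊆ Ṽ` and `η ≤ η̃` pointwise, then `m_{V,η,h} ≤ m_{Ṽ,η̃,h}`. -/
theorem mV_monotone {d : ℕ} (I : InstrField d) (h : Odom d)
    (V V' : Set (Site d)) (hV : V ⊆ V')
    (η η' : Config d) (hη : ∀ x : Site d, η x ≤ η' x) :
    ∀ x : Site d, mV I V η h x ≤ mV I V' η' h x := by
  intro x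
  unfold mV
  refine iSup₂_le fun β hβ => ?_
  exact le_iSup₂_of_le β ⟨fun y hy => hV (hβ.1 y hy),
    LegalSeq.mono I β η η' h hη hβ.2⟩ le_rfl

end ARW
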